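/- If r > 1 and γ̄ > 2·b̲, then f has a 2-cycle distinct from its fixed point: there exist x₁, x₂ ≥ 0 with x₁ ≠ x₂ such that f(x₁) = x₂ and f(x₂) = x₁. -/

import Mathlib

/-- If r > 1 and γ̄ > 2b̲, f has a 2-cycle distinct from its fixed
point. -/
theorem existence_of_two_cycle
    (bU bL gU gL r xl xu xm : ℝ) (f : ℝ → ℝ)
    (h1 : bU ≥ gU) (h2 : gU ≥ bL) (h3 : bL ≥ gL) (h4 : gL ≥ 0)
    (h5 : 0 < bL) (h6 : bL < bU) (h7 : gL < gU)
    (hr : r = (gU - gL) / (bU - bL))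
    (hxl : xl = 1 / (gL + 2 * bU * r))
    (hxu : xu = 1 / (gU + 2 * bL * r))
    (hxm : xm = 1 / gU)
    (hf1 : ∀ x : ℝ, 0 ≤ x → x ≤ xl → f x = (1 - gL * x) / (2 * bU))
    (hf2 : ∀ x : ℝ, xl ≤ x → x ≤ xu → f x = r * x)
    (hf3 : ∀ x : ℝ, xu ≤ x → x ≤ xm → f x = (1 - gU * x) / (2 * bL))
    (hf4 : ∀ x : ℝ, xm ≤ x → f x = 0)
    (hrgt : 1 < r) (hslope : 2 * bL < gU) :
    ∃ x₁ x₂ : ℝ, 0 ≤ x₁ ∧ 0 ≤ x₂ ∧ x₁ ≠ x₂ ∧ f x₁ = x₂ ∧ f x₂ = x₁ := by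
  have hgU : 0 < gU := lt_trans (by linarith) hslope
  have hr0 : 0 < r := lt_trans one_pos hrgt
  set D : ℝ := 2 * bL + gU * r with hD
  have hDpos : 0 < D := by positivity
  refine ⟨1 / D, r / D, by positivity, by positivity, ?_, ?_, ?_⟩
  · have : 1 / D < r / D := by
      exact div_lt_div_of_pos_right hrgt hDpos
    exact ne_of_lt this
  · -- f (1/D) = r/D via middle branch
    have hxl1 : xl ≤ 1 / D := by
      rw [hxl]
      apply one_div_le_one_div_of_le hDpos
      nlinarith [mul_nonneg (sub_nonneg.mpr hrgt.le) (le_of_lt (h5.trans h6)),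
        mul_nonneg hr0.le (sub_nonneg.mpr h1)]
    have hxu1 : 1 / D ≤ xu := by
      rw [hxu]
      have hden : 0 < gU + 2 * bL * r := by positivity
      apply one_div_le_one_div_of_le hden
      nlinarith [mul_nonneg (sub_nonneg.mpr (le_of_lt hrgt)) (sub_nonneg.mpr (le_of_lt hslope))]
    rw [hf2 _ hxl1 hxu1]
    ring
  · -- f (r/D) = 1/D via third branch
    have hxu2 : xu ≤ r / D := by
      rw [hxu]
      have hden : 0 < gU + 2 * bL * r := by positivity
      rw [div_le_div_iff₀ hden hDpos]
      nlinarith [mul_nonneg (mul_nonneg h5.le (sub_nonneg.mpr hrgt.le)) (by linarith : (0:ℝ) ≤ r + 1), mul_nonneg hgU.le (sub_nonneg.mpr hrgt.le)]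
    have hxm2 : r / D ≤ xm := by
      rw [hxm]
      rw [div_le_div_iff₀ hDpos hgU]
      nlinarith
    rw [hf3 _ hxu2 hxm2]
    field_simp
    ring
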